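/- Let m ≥ 2 and P = P(m) = ⋃_{k=1}^∞ {m^{2k−1}, m^{2k−1}+1, …, m^{2k}−1}. Then the map τ = σ_P × σ_P² × … × σ_P^{m−1} is topologically transitive, but τ × σ_P^m is not topologically transitive. In particular, the spacing shift σ_P is weakly mixing but not multi-transitive. -/

import Mathlib

open Set Function

/-- A continuous self-map is topologically transitive if every pair of nonempty
open sets is connected by some positive iterate. -/
def TopTransitive {X : Type*} [TopologicalSpace X] (f : X → X) : Prop :=
  ∀ U V : Set X, IsOpen U → IsOpen V → U.Nonempty → V.Nonempty →
    ∃ n : ℕ, 0 < n ∧ (f^[n] '' U ∩ V).Nonempty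

/-- The map `f^{(∗m)} = f × f² × ⋯ × f^m` acting on `X^m` (coordinates indexed by `Fin m`,
where coordinate `i` is moved by `f^[i+1]`). -/
def starMap {X : Type*} (f : X → X) (m : ℕ) : (Fin m → X) → (Fin m → X) :=
  fun x i => f^[(i : ℕ) + 1] (x i)

/-- `f` is weakly mixing if `f × f` is topologically transitive. -/
def WeaklyMixing {X : Type*} [TopologicalSpace X] (f : X → X) : Prop :=
  TopTransitive (fun p : X × X => (f p.1, f p.2))

/-- `f` is multi-transitive if `f × f² × ⋯ × f^m` is topologically transitive
for every `m ≥ 1`. -/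
def MultiTransitive {X : Type*} [TopologicalSpace X] (f : X → X) : Prop :=
  ∀ m : ℕ, 1 ≤ m → TopTransitive (starMap f m)

/-- `f` is Δ-transitive if for each `m ≥ 1` there is a residual set `Y ⊆ X` such that
for every `x ∈ Y` the diagonal tuple `(x, …, x)` has dense orbit under `f × f² × ⋯ × f^m`. -/
def DeltaTransitive {X : Type*} [TopologicalSpace X] (f : X → X) : Prop :=
  ∀ m : ℕ, 1 ≤ m → ∃ Y : Set X, Y ∈ residual X ∧
    ∀ x ∈ Y, Dense (Set.range fun n : ℕ => (starMap f m)^[n] (fun _ : Fin m => x))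

/-- A set `S ⊆ ℕ` is syndetic if there is `L > 0` with `[n, n+L] ∩ S ≠ ∅` for every `n`. -/
def Syndetic (S : Set ℕ) : Prop :=
  ∃ L : ℕ, 0 < L ∧ ∀ n : ℕ, ∃ k ∈ S, n ≤ k ∧ k ≤ n + L

/-- `N(U,V;f) = {n > 0 : f^n(U) ∩ V ≠ ∅}`. -/
def NSet {X : Type*} (f : X → X) (U V : Set X) : Set ℕ :=
  {n | 0 < n ∧ (f^[n] '' U ∩ V).Nonempty}

/-- `f` is syndetically transitive if `N(U,V;f)` is syndetic for all nonempty open `U, V`. -/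
def SyndeticallyTransitive {X : Type*} [TopologicalSpace X] (f : X → X) : Prop :=
  ∀ U V : Set X, IsOpen U → IsOpen V → U.Nonempty → V.Nonempty → Syndetic (NSet f U V)

/-- `f` is strongly transitive if for every nonempty open `U` there is `M > 0` with
`⋃_{j=1}^M f^j(U) = X`. -/
def StronglyTransitive {X : Type*} [TopologicalSpace X] (f : X → X) : Prop :=
  ∀ U : Set X, IsOpen U → U.Nonempty →
    ∃ M : ℕ, 0 < M ∧ (⋃ j ∈ Finset.Icc 1 M, f^[j] '' U) = Set.univ

/-- `f` is minimal if the only nonempty closed `f`-invariant subset is the whole space. -/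
def MinimalMap {X : Type*} [TopologicalSpace X] (f : X → X) : Prop :=
  ∀ K : Set X, IsClosed K → K.Nonempty → f '' K ⊆ K → K = Set.univ

/-- The spacing shift `Σ_P ⊆ {0,1}^ℕ`: all sequences such that whenever two distinct
positions carry the symbol `1`, the distance between them lies in `P`. -/
def SpacingSubshift (P : Set ℕ) : Set (ℕ → Bool) :=
  {x | ∀ i j : ℕ, i < j → x i = true → x j = true → j - i ∈ P}

theorem shift_mem_spacingSubshift {P : Set ℕ} {x : ℕ → Bool}
    (hx : x ∈ SpacingSubshift P) : (fun n => x (n + 1)) ∈ SpacingSubshift P := by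
  intro i j hij hi hj
  have h := hx (i + 1) (j + 1) (by omega) hi hj
  have : j + 1 - (i + 1) = j - i := by omega
  rwa [this] at h

/-- The shift map `σ_P : Σ_P → Σ_P` of the spacing shift. -/
def sigmaP (P : Set ℕ) : SpacingSubshift P → SpacingSubshift P :=
  fun x => ⟨fun n => x.1 (n + 1), shift_mem_spacingSubshift x.2⟩

/-- The cylinder `[1]_P` of points of `Σ_P` whose 0th coordinate is `1`. -/
def oneCyl (P : Set ℕ) : Set (SpacingSubshift P) := {x | x.1 0 = true}

/-- A set `P ⊆ ℕ` is thick if it contains arbitrarily long intervals of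
consecutive integers. -/
def Thick (P : Set ℕ) : Prop :=
  ∀ n : ℕ, ∃ k : ℕ, Set.Ico k (k + n) ⊆ P

/-- `P(m) = ⋃_{k ≥ 1} {m^{2k-1}, …, m^{2k} - 1}`. -/
def ProgressionSet (m : ℕ) : Set ℕ :=
  {n | ∃ k : ℕ, 1 ≤ k ∧ m ^ (2 * k - 1) ≤ n ∧ n < m ^ (2 * k)}

section Helpers

lemma sigmaP_iterate {P : Set ℕ} (n : ℕ) (x : SpacingSubshift P) (j : ℕ) :
    ((sigmaP P)^[n] x).1 j = x.1 (j + n) := by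
  induction n generalizing x with
  | zero => rfl
  | succ n ih =>
    rw [Function.iterate_succ_apply, ih (sigmaP P x)]
    rfl

lemma cyl_subset {P : Set ℕ} {U : Set (SpacingSubshift P)} (hU : IsOpen U)
    {u : SpacingSubshift P} (hu : u ∈ U) :
    ∃ L, ∀ z : SpacingSubshift P, (∀ j < L, z.1 j = u.1 j) → z ∈ U := by
  rw [isOpen_induced_iff] at hU
  obtain ⟨W, hW, rfl⟩ := hU
  have hmem : W ∈ nhds (u.1) := hW.mem_nhds hu
  rw [nhds_pi, Filter.mem_pi] at hmem
  obtain ⟨I, hIfin, s, hs, hsub⟩ := hmem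
  refine ⟨hIfin.toFinset.sup id + 1, fun z hz => ?_⟩
  apply hsub
  intro i hi
  have hle : i ≤ hIfin.toFinset.sup id := Finset.le_sup (f := id) (hIfin.mem_toFinset.mpr hi)
  rw [hz i (by omega)]
  exact mem_of_mem_nhds (hs i)

lemma glue {P : Set ℕ} (u v : SpacingSubshift P) (L k : ℕ) (hk : L ≤ k)
    (hP : ∀ d, k < d + L → d < k + L → d ∈ P) :
    ∃ z : SpacingSubshift P, (∀ j < L, z.1 j = u.1 j) ∧
      (∀ j < L, ((sigmaP P)^[k] z).1 j = v.1 j) := by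
  set zf : ℕ → Bool := fun j =>
    if j < L then u.1 j else if k ≤ j ∧ j < k + L then v.1 (j - k) else false with hzf
  have hzmem : zf ∈ SpacingSubshift P := by
    intro i j hij hi hj
    simp only [hzf] at hi hj
    by_cases hjL : j < L
    · have hiL : i < L := lt_trans hij hjL
      rw [if_pos hiL] at hi
      rw [if_pos hjL] at hj
      exact u.2 i j hij hi hj
    · rw [if_neg hjL] at hj
      by_cases hjk : k ≤ j ∧ j < k + L
      · rw [if_pos hjk] at hj
        by_cases hiL : i < L
        · rw [if_pos hiL] at hi
          exact hP (j - i) (by omega) (by omega)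
        · rw [if_neg hiL] at hi
          by_cases hik : k ≤ i ∧ i < k + L
          · rw [if_pos hik] at hi
            have hv := v.2 (i - k) (j - k) (by omega) hi hj
            have heq : j - k - (i - k) = j - i := by omega
            rwa [heq] at hv
          · rw [if_neg hik] at hi
            exact absurd hi (by simp)
      · rw [if_neg hjk] at hj
        exact absurd hj (by simp)
  refine ⟨⟨zf, hzmem⟩, fun j hj => ?_, fun j hj => ?_⟩
  · show zf j = u.1 j
    simp only [hzf, if_pos hj]
  · rw [sigmaP_iterate]
    show zf (j + k) = v.1 j
    have h1 : ¬ (j + k < L) := by omega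
    have h2 : k ≤ j + k ∧ j + k < k + L := by omega
    simp only [hzf, if_neg h1, if_pos h2, Nat.add_sub_cancel]

lemma mem_prog {m : ℕ} (hm : 2 ≤ m) {L t d : ℕ} (hL : 1 ≤ L) (ht : 1 ≤ t) (ht' : t ≤ m - 1)
    (hd1 : t * (m ^ (2 * L + 1) + L) < d + L)
    (hd2 : d < t * (m ^ (2 * L + 1) + L) + L) :
    d ∈ ProgressionSet m := by
  have hLpow : L ≤ m ^ (2 * L) := by
    have h0 : L < 2 ^ L := Nat.lt_two_pow_self
    have h1 : (2:ℕ) ^ L ≤ 2 ^ (2 * L) := Nat.pow_le_pow_right (by norm_num) (Nat.le_mul_of_pos_left L (by norm_num))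
    have h2 : (2:ℕ) ^ (2 * L) ≤ m ^ (2 * L) := Nat.pow_le_pow_left hm _
    omega
  refine ⟨L + 1, by omega, ?_, ?_⟩
  · have h1 : m ^ (2 * (L + 1) - 1) = m ^ (2 * L + 1) := by congr 1
    rw [h1]
    have h2 : 1 * (m ^ (2 * L + 1) + L) ≤ t * (m ^ (2 * L + 1) + L) :=
      Nat.mul_le_mul_right _ ht
    omega
  · have h2 : 2 * (L + 1) = (2 * L + 1) + 1 := by omega
    rw [h2, pow_succ]
    obtain ⟨m', rfl⟩ : ∃ m', m = m' + 2 := ⟨m - 2, by omega⟩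
    have ht'' : t ≤ m' + 1 := by omega
    set A := (m' + 2) ^ (2 * L + 1) with hA
    have hmul : (m' + 2) * L ≤ A := by
      calc (m' + 2) * L ≤ (m' + 2) * (m' + 2) ^ (2 * L) := Nat.mul_le_mul_left _ hLpow
      _ = A := by rw [hA, pow_succ]; ring
    have hle : t * (A + L) ≤ (m' + 1) * (A + L) := Nat.mul_le_mul_right _ ht''
    nlinarith [hle, hmul]

lemma hit_lemma {m : ℕ} (hm : 2 ≤ m) {L : ℕ} (hL : 1 ≤ L) {t : ℕ} (ht : 1 ≤ t)
    (ht' : t ≤ m - 1) (u v : SpacingSubshift (ProgressionSet m)) :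
    ∃ z : SpacingSubshift (ProgressionSet m),
      (∀ j < L, z.1 j = u.1 j) ∧
      (∀ j < L, ((sigmaP (ProgressionSet m))^[t * (m ^ (2 * L + 1) + L)] z).1 j = v.1 j) := by
  apply glue
  · have h1 : m ^ (2 * L + 1) + L ≤ t * (m ^ (2 * L + 1) + L) :=
      Nat.le_mul_of_pos_left _ ht
    omega
  · intro d hd1 hd2
    exact mem_prog hm hL ht ht' hd1 hd2

lemma starMap_iterate {X : Type*} (f : X → X) (M n : ℕ) (x : Fin M → X) :
    (starMap f M)^[n] x = fun i : Fin M => f^[((i : ℕ) + 1) * n] (x i) := by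
  induction n generalizing x with
  | zero => funext i; simp
  | succ n ih =>
    rw [Function.iterate_succ_apply, ih]
    funext i
    show f^[((i:ℕ)+1) * n] (f^[(i:ℕ)+1] (x i)) = _
    rw [← Function.iterate_add_apply]
    congr 1

lemma prod_iterate {X : Type*} (f : X → X) (n : ℕ) (p : X × X) :
    (fun q : X × X => (f q.1, f q.2))^[n] p = (f^[n] p.1, f^[n] p.2) := by
  induction n generalizing p with
  | zero => rfl
  | succ n ih =>
    rw [Function.iterate_succ_apply, ih]
    simp [Function.iterate_succ_apply]

lemma oneCyl_open (P : Set ℕ) : IsOpen (oneCyl P) := by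
  have hc : Continuous (fun x : SpacingSubshift P => x.1 0) :=
    (continuous_apply 0).comp continuous_subtype_val
  exact (isOpen_discrete {true}).preimage hc

def epoint (P : Set ℕ) : SpacingSubshift P :=
  ⟨fun j => decide (j = 0), by
    intro i j hij hi hj
    simp only [decide_eq_true_eq] at hi hj
    omega⟩

end Helpers

section MainParts

variable {m : ℕ}

/-- Part 1 generalized: transitivity of the M-fold star map when all multipliers `1..M` are
at most `m - 1`. -/
lemma star_transitive (hm : 2 ≤ m) (M : ℕ) (hM : M ≤ m - 1) :
    TopTransitive (starMap (sigmaP (ProgressionSet m)) M) := by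
  intro U V hUo hVo hUne hVne
  obtain ⟨u, hu⟩ := hUne
  obtain ⟨v, hv⟩ := hVne
  obtain ⟨IU, sU, hsU, hUsub⟩ := isOpen_pi_iff.mp hUo u hu
  obtain ⟨IV, sV, hsV, hVsub⟩ := isOpen_pi_iff.mp hVo v hv
  -- enlarge to full pi sets
  set sU' : Fin M → Set (SpacingSubshift (ProgressionSet m)) :=
    fun i => if i ∈ IU then sU i else Set.univ with hsU'
  set sV' : Fin M → Set (SpacingSubshift (ProgressionSet m)) :=
    fun i => if i ∈ IV then sV i else Set.univ with hsV'
  have hsU'open : ∀ i, IsOpen (sU' i) := by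
    intro i; simp only [hsU']; split
    · exact (hsU i ‹_›).1
    · exact isOpen_univ
  have hsV'open : ∀ i, IsOpen (sV' i) := by
    intro i; simp only [hsV']; split
    · exact (hsV i ‹_›).1
    · exact isOpen_univ
  have hsU'mem : ∀ i, u i ∈ sU' i := by
    intro i; simp only [hsU']; split
    · exact (hsU i ‹_›).2
    · exact Set.mem_univ _
  have hsV'mem : ∀ i, v i ∈ sV' i := by
    intro i; simp only [hsV']; split
    · exact (hsV i ‹_›).2
    · exact Set.mem_univ _
  have hUsub' : Set.pi Set.univ sU' ⊆ U := by
    intro y hy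
    apply hUsub
    intro i hi
    have h := hy i (Set.mem_univ i)
    have hi' : i ∈ IU := hi
    simpa only [hsU', if_pos hi'] using h
  have hVsub' : Set.pi Set.univ sV' ⊆ V := by
    intro y hy
    apply hVsub
    intro i hi
    have h := hy i (Set.mem_univ i)
    have hi' : i ∈ IV := hi
    simpa only [hsV', if_pos hi'] using h
  choose LU hLU using fun i => cyl_subset (hsU'open i) (hsU'mem i)
  choose LV hLV using fun i => cyl_subset (hsV'open i) (hsV'mem i)
  set L : ℕ := (Finset.univ.sup fun i : Fin M => max (LU i) (LV i)) + 1 with hLdef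
  have hL : 1 ≤ L := by omega
  set n : ℕ := m ^ (2 * L + 1) + L with hn
  have hLle : ∀ i : Fin M, LU i ≤ L ∧ LV i ≤ L := by
    intro i
    have h1 : max (LU i) (LV i) ≤ Finset.univ.sup fun i : Fin M => max (LU i) (LV i) :=
      Finset.le_sup (f := fun i : Fin M => max (LU i) (LV i)) (Finset.mem_univ i)
    constructor
    · have := le_max_left (LU i) (LV i); omega
    · have := le_max_right (LU i) (LV i); omega
  have hz : ∀ i : Fin M, ∃ z : SpacingSubshift (ProgressionSet m),
      (∀ j < L, z.1 j = (u i).1 j) ∧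
      (∀ j < L, ((sigmaP (ProgressionSet m))^[((i : ℕ) + 1) * n] z).1 j = (v i).1 j) := by
    intro i
    exact hit_lemma hm hL (by omega) (by have := i.isLt; omega) (u i) (v i)
  choose z hz1 hz2 using hz
  have hnpos : 0 < n := by
    have := Nat.one_le_pow (2 * L + 1) m (by omega)
    omega
  refine ⟨n, hnpos, (starMap (sigmaP (ProgressionSet m)) M)^[n] z, ⟨z, ?_, rfl⟩, ?_⟩
  · apply hUsub'
    intro i _
    apply hLU i
    intro j hj
    exact hz1 i j (by have := (hLle i).1; omega)
  · apply hVsub'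
    intro i _
    rw [starMap_iterate]
    apply hLV i
    intro j hj
    exact hz2 i j (by have := (hLle i).2; omega)

lemma star_not_transitive (hm : 2 ≤ m) :
    ¬ TopTransitive (starMap (sigmaP (ProgressionSet m)) m) := by
  intro h
  set P := ProgressionSet m with hP
  obtain ⟨n, hn, w, ⟨x, hxU, hxw⟩, hwV⟩ :=
    h (Set.pi Set.univ fun _ => oneCyl P) (Set.pi Set.univ fun _ => oneCyl P)
      (isOpen_set_pi Set.finite_univ fun i _ => oneCyl_open P)
      (isOpen_set_pi Set.finite_univ fun i _ => oneCyl_open P)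
      ⟨fun _ => epoint P, fun i _ => rfl⟩
      ⟨fun _ => epoint P, fun i _ => rfl⟩
  have key : ∀ t, 1 ≤ t → t ≤ m → t * n ∈ P := by
    intro t ht htm
    set i : Fin m := ⟨t - 1, by omega⟩ with hi
    have h0 : (x i).1 0 = true := hxU i (Set.mem_univ i)
    have h1 : (w i).1 0 = true := hwV i (Set.mem_univ i)
    rw [← hxw, starMap_iterate] at h1
    rw [sigmaP_iterate, Nat.zero_add] at h1
    have h2 : (x i).1 (((i : ℕ) + 1) * n) = true := h1
    have h3 := (x i).2 0 (((i : ℕ) + 1) * n) (by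
      have : (i : ℕ) = t - 1 := rfl
      have h4 : 1 * 1 ≤ ((i : ℕ) + 1) * n := Nat.mul_le_mul (by omega) hn
      omega) h0 h2
    have h5 : ((i : ℕ) + 1) * n - 0 = t * n := by
      have hieq : (i : ℕ) = t - 1 := rfl
      rw [Nat.sub_zero, hieq, show t - 1 + 1 = t by omega]
    rwa [h5] at h3
  obtain ⟨k0, hk0, ha, hb⟩ := key 1 le_rfl (by omega)
  obtain ⟨k1, hk1, hc, hd⟩ := key m (by omega) le_rfl
  rw [one_mul] at ha hb
  -- m * n ≥ m ^ (2 k0) and m * n < m ^ (2 k0 + 1)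
  have e1 : m ^ (2 * k0) ≤ m * n := by
    calc m ^ (2 * k0) = m * m ^ (2 * k0 - 1) := by
          rw [← pow_succ']
          congr 1
          omega
    _ ≤ m * n := Nat.mul_le_mul_left m ha
  have e2 : m * n < m ^ (2 * k0 + 1) := by
    calc m * n < m * m ^ (2 * k0) :=
          mul_lt_mul_of_pos_left hb (by omega)
    _ = m ^ (2 * k0 + 1) := by rw [pow_succ']
  have e3 : m ^ (2 * k0) < m ^ (2 * k1) := lt_of_le_of_lt e1 hd
  have e4 : 2 * k0 < 2 * k1 := (Nat.pow_lt_pow_iff_right (by omega)).mp e3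
  have e5 : m ^ (2 * k0 + 1) ≤ m ^ (2 * k1 - 1) :=
    Nat.pow_le_pow_right (by omega) (by omega)
  omega

lemma weakly_mixing (hm : 2 ≤ m) : WeaklyMixing (sigmaP (ProgressionSet m)) := by
  intro U V hUo hVo hUne hVne
  obtain ⟨u, hu⟩ := hUne
  obtain ⟨v, hv⟩ := hVne
  obtain ⟨U1, U2, hU1, hU2, hu1, hu2, hUsub⟩ := isOpen_prod_iff.mp hUo u.1 u.2 hu
  obtain ⟨V1, V2, hV1, hV2, hv1, hv2, hVsub⟩ := isOpen_prod_iff.mp hVo v.1 v.2 hv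
  obtain ⟨L1, h1⟩ := cyl_subset hU1 hu1
  obtain ⟨L2, h2⟩ := cyl_subset hU2 hu2
  obtain ⟨L3, h3⟩ := cyl_subset hV1 hv1
  obtain ⟨L4, h4⟩ := cyl_subset hV2 hv2
  set L : ℕ := max (max L1 L2) (max L3 L4) + 1 with hLdef
  have hL : 1 ≤ L := by omega
  set n : ℕ := m ^ (2 * L + 1) + L with hn
  have hone : (1 : ℕ) ≤ m - 1 := by omega
  obtain ⟨z1, hz1a, hz1b⟩ := hit_lemma hm hL le_rfl hone u.1 v.1
  obtain ⟨z2, hz2a, hz2b⟩ := hit_lemma hm hL le_rfl hone u.2 v.2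
  rw [one_mul] at hz1b hz2b
  have hnpos : 0 < n := by
    have := Nat.one_le_pow (2 * L + 1) m (by omega)
    omega
  have hb1 : max L1 L2 < L := by omega
  have hb2 : max L3 L4 < L := by omega
  refine ⟨n, hnpos, _, ⟨(z1, z2), ?_, rfl⟩, ?_⟩
  · apply hUsub
    constructor
    · exact h1 z1 fun j hj => hz1a j (by have := le_max_left L1 L2; omega)
    · exact h2 z2 fun j hj => hz2a j (by have := le_max_right L1 L2; omega)
  · rw [prod_iterate]
    apply hVsub
    constructor
    · exact h3 _ fun j hj => hz1b j (by have := le_max_left L3 L4; omega)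
    · exact h4 _ fun j hj => hz2b j (by have := le_max_right L3 L4; omega)

end MainParts

/-- For `m ≥ 2` and `P = P(m)`, the map
`τ = σ_P × σ_P² × ⋯ × σ_P^{m-1}` is transitive, while `τ × σ_P^m` is not; in particular
`σ_P` is weakly mixing but not multi-transitive. -/
theorem statement11 (m : ℕ) (hm : 2 ≤ m) :
    TopTransitive (starMap (sigmaP (ProgressionSet m)) (m - 1)) ∧
    ¬ TopTransitive (starMap (sigmaP (ProgressionSet m)) m) ∧
    WeaklyMixing (sigmaP (ProgressionSet m)) ∧
    ¬ MultiTransitive (sigmaP (ProgressionSet m)) := by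
  refine ⟨star_transitive hm (m - 1) le_rfl, star_not_transitive hm, weakly_mixing hm, ?_⟩
  intro hMT
  exact star_not_transitive hm (hMT m (by omega))
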